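/- Mandelstam–Tamm inequality for a time-independent Hamiltonian: let H be a self-adjoint bounded operator on a complex Hilbert space E, let ψ₀ be a unit vector, and for t ∈ ℝ let ψ_t = exp(−i t H)·ψ₀, where exp denotes the operator exponential of the bounded operator −i t H. Then for every t ≥ 0, arccos|⟨ψ₀, ψ_t⟩| ≤ t·√(‖Hψ₀‖² − (Re⟨ψ₀, Hψ₀⟩)²). -/

import Mathlib

open scoped InnerProductSpace
open Real Filter Set Topology

lemma mt_barrier {g g' : ℝ → ℝ} {Δ t : ℝ} (hΔ : 0 ≤ Δ) (ht : 0 ≤ t)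
    (hg : ∀ s, HasDerivAt g (g' s) s)
    (hbound : ∀ s, |g' s| ≤ Δ * Real.sqrt (1 - g s ^ 2))
    (hg0 : g 0 = 1) (hπ : Δ * t < π) : Real.cos (Δ * t) ≤ g t := by
  have key : ∀ ε > (0:ℝ), (Δ+ε)*(t+ε) < π → Real.cos ((Δ+ε)*(t+ε)) ≤ g t := by
    intro ε hε hπ'
    set D := Δ + ε with hD_def
    have hD : 0 < D := by positivity
    set f : ℝ → ℝ := fun x => Real.cos (D*(x+ε)) - g x with hf_def
    set f' : ℝ → ℝ := fun x => -(Real.sin (D*(x+ε)) * D) - g' x with hf'_def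
    have hfd : ∀ x, HasDerivAt f (f' x) x := by
      intro x
      have h1 : HasDerivAt (fun x : ℝ => D*(x+ε)) D x := by
        simpa using ((hasDerivAt_id x).add_const ε).const_mul D
      have h2 := (Real.hasDerivAt_cos (D*(x+ε))).comp x h1
      have h3 := h2.sub (hg x)
      rw [neg_mul] at h3
      exact h3
    have main : f t ≤ 0 := by
      have := image_le_of_liminf_slope_right_lt_deriv_boundary
        (f := f) (f' := f') (a := 0) (b := t) (B := fun _ => 0) (B' := fun _ => 0)
        (fun x _ => (hfd x).continuousAt.continuousWithinAt)
        (by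
          intro x _ r hr
          have hs : Tendsto (slope f x) (𝓝[>] x) (𝓝 (f' x)) :=
            (hasDerivAt_iff_tendsto_slope.1 (hfd x)).mono_left
              (nhdsWithin_mono x fun z hz => ne_of_gt hz)
          exact (hs.eventually (eventually_lt_nhds hr)).frequently)
        (by
          simp only [f, hg0]
          exact sub_nonpos.2 (Real.cos_le_one _))
        (fun x => hasDerivAt_const x 0)
        (by
          intro x hx hfx
          have hgx : g x = Real.cos (D*(x+ε)) := by
            have := hfx
            simp only [f] at this
            linarith
          have hθpos : 0 < D*(x+ε) := by
            have := hx.1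
            positivity
          have hθlt : D*(x+ε) < π := by
            have : D*(x+ε) ≤ D*(t+ε) := by
              apply mul_le_mul_of_nonneg_left _ hD.le
              linarith [hx.2.le]
            linarith
          have hsin : 0 < Real.sin (D*(x+ε)) := Real.sin_pos_of_pos_of_lt_pi hθpos hθlt
          have hsqrt : Real.sqrt (1 - g x ^ 2) = Real.sin (D*(x+ε)) := by
            rw [hgx, ← Real.sin_sq, Real.sqrt_sq hsin.le]
          have hb := hbound x
          rw [hsqrt] at hb
          have : g' x ≥ -(Δ * Real.sin (D*(x+ε))) := by
            have := abs_le.1 hb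
            linarith [this.1]
          simp only [f']
          nlinarith
        )
      exact this (right_mem_Icc.2 ht)
    simp only [f] at main
    linarith
  have h1 : Tendsto (fun ε : ℝ => (Δ+ε)*(t+ε)) (𝓝[>] (0:ℝ)) (𝓝 (Δ*t)) := by
    have : Tendsto (fun ε : ℝ => (Δ+ε)*(t+ε)) (𝓝 (0:ℝ)) (𝓝 ((Δ+0)*(t+0))) := by
      exact ((continuous_const.add continuous_id).mul (continuous_const.add continuous_id)).tendsto 0
    simpa using this.mono_left nhdsWithin_le_nhds
  have h2 : Tendsto (fun ε : ℝ => Real.cos ((Δ+ε)*(t+ε))) (𝓝[>] (0:ℝ)) (𝓝 (Real.cos (Δ*t))) :=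
    (Real.continuous_cos.tendsto _).comp h1
  refine le_of_tendsto h2 ?_
  filter_upwards [self_mem_nhdsWithin, h1.eventually (eventually_lt_nhds hπ)] with ε hε hlt
  exact key ε hε hlt
/-- Mandelstam–Tamm inequality for a time-independent
Hamiltonian: for a self-adjoint bounded operator `H`, a unit vector `ψ₀`, and
`ψ_t = exp(-i t H) ψ₀`, one has, for every `t ≥ 0`,
`arccos |⟨ψ₀, ψ_t⟩| ≤ t √(‖Hψ₀‖² - (Re⟨ψ₀, Hψ₀⟩)²)`. -/
theorem mandelstam_tamm_time_independent
    {E : Type*} [NormedAddCommGroup E] [InnerProductSpace ℂ E] [CompleteSpace E]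
    (H : E →L[ℂ] E) (hH : ∀ x y : E, ⟪H x, y⟫_ℂ = ⟪x, H y⟫_ℂ)
    (ψ₀ : E) (hψ₀ : ‖ψ₀‖ = 1)
    (ψ : ℝ → E)
    (hψ : ∀ t : ℝ, ψ t = (NormedSpace.exp ((-(Complex.I * t)) • H)) ψ₀)
    (t : ℝ) (ht : 0 ≤ t) :
    Real.arccos (‖⟪ψ₀, ψ t⟫_ℂ‖)
      ≤ t * Real.sqrt (‖H ψ₀‖ ^ 2 - ((⟪ψ₀, H ψ₀⟫_ℂ).re) ^ 2) := by
  have hsymm : (H : E →ₗ[ℂ] E).IsSymmetric := fun x y => hH x y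
  set E₀ : ℝ := (⟪ψ₀, H ψ₀⟫_ℂ).re with hE₀def
  -- ⟪ψ₀, H ψ₀⟫ is real
  have hE0c : ⟪ψ₀, H ψ₀⟫_ℂ = (E₀ : ℂ) := by
    have h1 : (starRingEnd ℂ) ⟪ψ₀, H ψ₀⟫_ℂ = ⟪ψ₀, H ψ₀⟫_ℂ := by
      rw [inner_conj_symm]; exact hH ψ₀ ψ₀
    exact (Complex.conj_eq_iff_re.1 h1).symm
  have hE0c' : ⟪H ψ₀, ψ₀⟫_ℂ = (E₀ : ℂ) := by rw [hH ψ₀ ψ₀]; exact hE0c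
  have hψ₀inner : ⟪ψ₀, ψ₀⟫_ℂ = 1 := by
    rw [inner_self_eq_norm_sq_to_K, hψ₀]; norm_num
  set w : E := H ψ₀ - (E₀ : ℂ) • ψ₀ with hwdef
  have hw0 : ⟪w, ψ₀⟫_ℂ = 0 := by
    rw [hwdef, inner_sub_left, inner_smul_left, hE0c', hψ₀inner]
    simp
  have hw2 : ‖w‖ ^ 2 = ‖H ψ₀‖ ^ 2 - E₀ ^ 2 := by
    rw [hwdef, @norm_sub_sq ℂ]
    have h1 : ⟪H ψ₀, (E₀:ℂ) • ψ₀⟫_ℂ = (E₀:ℂ) * (E₀:ℂ) := by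
      rw [inner_smul_right, hE0c']
    have h2 : ‖(E₀:ℂ) • ψ₀‖ = |E₀| := by
      rw [norm_smul, hψ₀, Complex.norm_real]; simp
    rw [h1, h2]
    simp [Complex.ofReal_mul]
    ring
  have hΔeq : Real.sqrt (‖H ψ₀‖ ^ 2 - E₀ ^ 2) = ‖w‖ := by
    rw [← hw2, Real.sqrt_sq (norm_nonneg w)]
  set Δ : ℝ := ‖w‖ with hΔdef
  rw [hΔeq]
  -- unitarity
  have hHsa : IsSelfAdjoint H := ContinuousLinearMap.isSelfAdjoint_iff_isSymmetric.2 hsymm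
  have hnorm : ∀ s : ℝ, ‖ψ s‖ = 1 := by
    intro s
    have h1 : star ((-(Complex.I * (s:ℂ))) • H) = (Complex.I * (s:ℂ)) • H := by
      rw [star_smul, hHsa.star_eq]
      congr 1
      simp [Complex.ext_iff]
    have hcomm : Commute ((Complex.I * (s:ℂ)) • H) ((-(Complex.I * (s:ℂ))) • H) :=
      ((Commute.refl H).smul_left _).smul_right _
    have h2 : star (NormedSpace.exp ((-(Complex.I * (s:ℂ))) • H)) *
        NormedSpace.exp ((-(Complex.I * (s:ℂ))) • H) = 1 := by
      letI : NormedAlgebra ℚ (E →L[ℂ] E) := NormedAlgebra.restrictScalars ℚ ℂ (E →L[ℂ] E)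
      rw [NormedSpace.star_exp, h1, ← NormedSpace.exp_add_of_commute hcomm]
      have h3 : (Complex.I * (s:ℂ)) • H + (-(Complex.I * (s:ℂ))) • H = 0 := by
        rw [← add_smul]; simp
      rw [h3, NormedSpace.exp_zero]
    set U : E →L[ℂ] E := NormedSpace.exp ((-(Complex.I * (s:ℂ))) • H) with hUdef
    have h4 : ⟪ψ s, ψ s⟫_ℂ = ⟪ψ₀, ψ₀⟫_ℂ := by
      rw [hψ s]
      calc ⟪U ψ₀, U ψ₀⟫_ℂ = ⟪ψ₀, (ContinuousLinearMap.adjoint U) (U ψ₀)⟫_ℂ :=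
            (ContinuousLinearMap.adjoint_inner_right U ψ₀ (U ψ₀)).symm
        _ = ⟪ψ₀, (star U * U) ψ₀⟫_ℂ := by rw [ContinuousLinearMap.star_eq_adjoint]; rfl
        _ = ⟪ψ₀, ψ₀⟫_ℂ := by rw [h2]; rfl
    have h5 : ‖ψ s‖ ^ 2 = 1 := by
      have := congrArg Complex.re h4
      rw [inner_self_eq_norm_sq_to_K, inner_self_eq_norm_sq_to_K] at h4
      have h6 : ((‖ψ s‖ : ℂ)) ^ 2 = ((‖ψ₀‖ : ℂ)) ^ 2 := h4
      rw [hψ₀] at h6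
      norm_cast at h6
      simpa using h6
    nlinarith [norm_nonneg (ψ s)]
  -- derivative of ψ
  set B : E →L[ℂ] E := (-Complex.I) • H with hBdef
  have hψeq : ∀ u : ℝ, ψ u = NormedSpace.exp ((u:ℂ) • B) ψ₀ := by
    intro u
    rw [hψ u]
    congr 2
    rw [hBdef, smul_smul]
    congr 1
    ring
  have hψ' : ∀ s : ℝ, HasDerivAt ψ (B (ψ s)) s := by
    intro s
    have h1 : HasDerivAt (fun z : ℂ => NormedSpace.exp (z • B))
        (NormedSpace.exp ((s:ℂ) • B) * B) (s:ℂ) := hasDerivAt_exp_smul_const B (s:ℂ)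
    have h2 : HasDerivAt (fun u : ℝ => NormedSpace.exp ((u:ℂ) • B))
        (NormedSpace.exp ((s:ℂ) • B) * B) s := by
      exact (h1.scomp s Complex.ofRealCLM.hasDerivAt).congr_deriv (by simp)
    have h3 : HasDerivAt (fun u : ℝ => NormedSpace.exp ((u:ℂ) • B) ψ₀)
        ((NormedSpace.exp ((s:ℂ) • B) * B) ψ₀) s :=
      ((ContinuousLinearMap.apply ℂ E ψ₀).restrictScalars ℝ).hasFDerivAt.comp_hasDerivAt s h2
    have h4 : (NormedSpace.exp ((s:ℂ) • B) * B) ψ₀ = B (ψ s) := by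
      have hc : Commute B (NormedSpace.exp ((s:ℂ) • B)) :=
        ((Commute.refl B).smul_right (s:ℂ)).exp_right
      calc (NormedSpace.exp ((s:ℂ) • B) * B) ψ₀
          = (B * NormedSpace.exp ((s:ℂ) • B)) ψ₀ := by rw [hc.eq]
        _ = B (NormedSpace.exp ((s:ℂ) • B) ψ₀) := rfl
        _ = B (ψ s) := by rw [hψeq s]
    rw [h4] at h3
    have hfun : ψ = fun u : ℝ => NormedSpace.exp ((u:ℂ) • B) ψ₀ := funext hψeq
    rw [hfun] at h3 ⊢
    exact h3
  set c : ℝ → ℂ := fun s => ⟪ψ₀, ψ s⟫_ℂ with hcdef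
  set e : ℝ → ℂ := fun s => Complex.exp (Complex.I * (E₀:ℂ) * s) with hedef
  set g : ℝ → ℝ := fun s => (e s * c s).re with hgdef
  set g' : ℝ → ℝ := fun s => (e s * (-Complex.I) * ⟪w, ψ s⟫_ℂ).re with hg'def
  have hc' : ∀ s : ℝ, HasDerivAt c ⟪ψ₀, B (ψ s)⟫_ℂ s := by
    intro s
    have := ((innerSL ℂ ψ₀).restrictScalars ℝ).hasFDerivAt.comp_hasDerivAt s (hψ' s)
    exact this
  have he' : ∀ s : ℝ, HasDerivAt e (Complex.I * (E₀:ℂ) * e s) s := by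
    intro s
    have h1 : HasDerivAt (fun z : ℂ => Complex.I * (E₀:ℂ) * z) (Complex.I * (E₀:ℂ)) (s:ℂ) := by
      simpa using (hasDerivAt_id (s:ℂ)).const_mul (Complex.I * (E₀:ℂ))
    have h2 := (Complex.hasDerivAt_exp (Complex.I * (E₀:ℂ) * (s:ℂ))).comp (s:ℂ) h1
    have h3 := h2.comp_ofReal
    simpa [hedef, mul_comm] using h3
  have hgderiv : ∀ s : ℝ, HasDerivAt g (g' s) s := by
    intro s
    have hmul := (he' s).mul (hc' s)
    have hre := Complex.reCLM.hasFDerivAt.comp_hasDerivAt s hmul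
    have halg : Complex.I * (E₀:ℂ) * e s * c s + e s * ⟪ψ₀, B (ψ s)⟫_ℂ
        = e s * (-Complex.I) * ⟪w, ψ s⟫_ℂ := by
      have hBapp : ⟪ψ₀, B (ψ s)⟫_ℂ = (-Complex.I) * ⟪ψ₀, H (ψ s)⟫_ℂ := by
        rw [hBdef]
        simp [ContinuousLinearMap.smul_apply, inner_smul_right]
      have hws : ⟪w, ψ s⟫_ℂ = ⟪ψ₀, H (ψ s)⟫_ℂ - (E₀:ℂ) * c s := by
        rw [hwdef, inner_sub_left, inner_smul_left, hH ψ₀ (ψ s), Complex.conj_ofReal, hcdef]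
      rw [hBapp, hws]
      ring
    rw [halg] at hre
    exact hre
  have hb : ∀ s : ℝ, |g' s| ≤ Δ * Real.sqrt (1 - g s ^ 2) := by
    intro s
    have habs_e : ‖e s‖ = 1 := by
      rw [hedef]
      simp [Complex.norm_exp]
    have h1 : ⟪w, ψ s⟫_ℂ = ⟪w, ψ s - c s • ψ₀⟫_ℂ := by
      rw [inner_sub_right, inner_smul_right, hw0, mul_zero, sub_zero]
    have h2 : ‖ψ s - c s • ψ₀‖ ^ 2 = 1 - ‖c s‖ ^ 2 := by
      rw [@norm_sub_sq ℂ]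
      have ha : ⟪ψ s, c s • ψ₀⟫_ℂ = c s * (starRingEnd ℂ) (c s) := by
        rw [inner_smul_right, ← inner_conj_symm]
      have hb2 : RCLike.re ⟪ψ s, c s • ψ₀⟫_ℂ = ‖c s‖ ^ 2 := by
        rw [ha, Complex.mul_conj]
        simp [Complex.sq_norm]
      rw [hb2, norm_smul, hnorm s, hψ₀]
      simp
      ring
    have hcle : ‖c s‖ ≤ 1 := by
      have := norm_inner_le_norm (𝕜 := ℂ) ψ₀ (ψ s)
      rw [hψ₀, hnorm s, one_mul] at this
      simpa [hcdef] using this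
    have hgle : g s ^ 2 ≤ ‖c s‖ ^ 2 := by
      have h3 : |g s| ≤ ‖e s * c s‖ := Complex.abs_re_le_norm _
      rw [norm_mul, habs_e, one_mul] at h3
      have h4 := pow_le_pow_left₀ (abs_nonneg (g s)) h3 2
      rwa [sq_abs] at h4
    have hnorm_eq : ‖ψ s - c s • ψ₀‖ = Real.sqrt (1 - ‖c s‖ ^ 2) := by
      rw [← h2, Real.sqrt_sq (norm_nonneg _)]
    calc |g' s| ≤ ‖e s * (-Complex.I) * ⟪w, ψ s⟫_ℂ‖ := Complex.abs_re_le_norm _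
      _ = ‖⟪w, ψ s⟫_ℂ‖ := by
          rw [norm_mul, norm_mul, habs_e]
          simp
      _ = ‖⟪w, ψ s - c s • ψ₀⟫_ℂ‖ := by rw [← h1]
      _ ≤ ‖w‖ * ‖ψ s - c s • ψ₀‖ := by
          have := norm_inner_le_norm (𝕜 := ℂ) w (ψ s - c s • ψ₀)
          exact this
      _ = Δ * Real.sqrt (1 - ‖c s‖ ^ 2) := by rw [hnorm_eq, hΔdef]
      _ ≤ Δ * Real.sqrt (1 - g s ^ 2) := by
          apply mul_le_mul_of_nonneg_left _ (norm_nonneg w)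
          apply Real.sqrt_le_sqrt
          linarith
  have hg0 : g 0 = 1 := by
    have hψ0 : ψ 0 = ψ₀ := by
      rw [hψeq 0]
      norm_num [NormedSpace.exp_zero]
    rw [hgdef]
    simp only [hedef, hcdef, hψ0, hψ₀inner]
    norm_num
  -- conclusion
  rcases le_or_gt (π/2) (t * Δ) with hcase | hcase
  · calc arccos (‖c t‖) ≤ π/2 :=
        Real.arccos_le_pi_div_two.2 (norm_nonneg _)
      _ ≤ t * Δ := hcase
  · have hΔt : Δ * t < π := by
      have := Real.pi_pos
      nlinarith [mul_comm t Δ]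
    have hcos : Real.cos (Δ * t) ≤ g t :=
      mt_barrier (norm_nonneg w) ht hgderiv hb hg0 hΔt
    have h1 : g t ≤ ‖c t‖ := by
      have h3 : |g t| ≤ ‖e t * c t‖ := Complex.abs_re_le_norm _
      have habs_e : ‖e t‖ = 1 := by
        rw [hedef]
        simp [Complex.norm_exp]
      rw [norm_mul, habs_e, one_mul] at h3
      exact (le_abs_self _).trans h3
    have h2 : Real.cos (Δ * t) ≤ ‖c t‖ := hcos.trans h1
    calc arccos (‖c t‖) ≤ arccos (Real.cos (Δ * t)) := by
          rw [Real.arccos_eq_pi_div_two_sub_arcsin, Real.arccos_eq_pi_div_two_sub_arcsin]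
          have := Real.monotone_arcsin h2
          linarith
      _ = Δ * t := Real.arccos_cos (by positivity) hΔt.le
      _ = t * Δ := mul_comm _ _
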